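/- Cumulative incidence of the terminal event without a preceding intermediate event in the latent-time construction: for every t ≥ 0, P(T₂ ≤ t and D₀ ≤ T₁) = ∫₀ᵗ exp{−Λ₀(s) − Λ⋆(s)} λ₀(s) ds. -/

import Mathlib

open MeasureTheory ProbabilityTheory Filter Set

/-- Cumulative hazard `Λ(t) = ∫₀ᵗ λ(u) du`. -/
noncomputable def cumHaz (lam : ℝ → ℝ) (t : ℝ) : ℝ := ∫ u in (0:ℝ)..t, lam u

/-- Post-intermediate cumulative hazard `Λ₁(t,s) = ∫ₛᵗ λ₁(u,s) du`. -/
noncomputable def cumHaz1 (lam1 : ℝ → ℝ → ℝ) (t s : ℝ) : ℝ := ∫ u in s..t, lam1 u s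

/-- The counterfactual cumulative incidence function
`F(t) = ∫₀ᵗ e^{−Λ₀(s)−Λ⋆(s)} λ₀(s) ds + ∫₀ᵗ e^{−Λ₀(s)−Λ⋆(s)} λ⋆(s) (1 − e^{−Λ₁(t,s)}) ds`. -/
noncomputable def cif (lamS lam0 : ℝ → ℝ) (lam1 : ℝ → ℝ → ℝ) (t : ℝ) : ℝ :=
  (∫ s in (0:ℝ)..t, Real.exp (-cumHaz lam0 s - cumHaz lamS s) * lam0 s) +
  ∫ s in (0:ℝ)..t, Real.exp (-cumHaz lam0 s - cumHaz lamS s) * lamS s *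
    (1 - Real.exp (-cumHaz1 lam1 t s))

section helpers
variable {lam : ℝ → ℝ}

lemma cumHaz_zero' (lam : ℝ → ℝ) : cumHaz lam 0 = 0 := intervalIntegral.integral_same

lemma cumHaz_ii (hc : ContinuousOn lam (Set.Ici 0)) {a b : ℝ} (ha : 0 ≤ a) (hb : 0 ≤ b) :
    IntervalIntegrable lam volume a b := by
  apply (hc.mono ?_).intervalIntegrable
  intro x hx
  exact le_trans (le_min ha hb) hx.1

lemma cumHaz_add (hc : ContinuousOn lam (Set.Ici 0)) {a b : ℝ} (ha : 0 ≤ a) (hb : a ≤ b) :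
    cumHaz lam b = cumHaz lam a + ∫ u in a..b, lam u :=
  (intervalIntegral.integral_add_adjacent_intervals (cumHaz_ii hc le_rfl ha)
    (cumHaz_ii hc ha (ha.trans hb))).symm

lemma cumHaz_strictMonoOn (hc : ContinuousOn lam (Set.Ici 0))
    (hp : ∀ t ∈ Set.Ici (0:ℝ), 0 < lam t) : StrictMonoOn (cumHaz lam) (Set.Ici 0) := by
  intro a ha b hb hab
  rw [cumHaz_add hc ha hab.le]
  have : 0 < ∫ u in a..b, lam u := by
    apply intervalIntegral.intervalIntegral_pos_of_pos_on (cumHaz_ii hc ha hb) _ hab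
    intro x hx
    exact hp x (le_trans ha hx.1.le)
  linarith

lemma cumHaz_nonneg (hc : ContinuousOn lam (Set.Ici 0))
    (hp : ∀ t ∈ Set.Ici (0:ℝ), 0 < lam t) {t : ℝ} (ht : 0 ≤ t) : 0 ≤ cumHaz lam t := by
  rcases eq_or_lt_of_le ht with h | h
  · rw [← h, cumHaz_zero']
  · have := cumHaz_strictMonoOn hc hp (le_refl (0:ℝ)) ht h
    rw [cumHaz_zero'] at this; exact this.le

lemma cumHaz_continuousOn (hc : ContinuousOn lam (Set.Ici 0)) :
    ContinuousOn (cumHaz lam) (Set.Ici 0) := by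
  intro x hx
  have hx0 : (0:ℝ) ≤ x := hx
  have hI : ContinuousOn (cumHaz lam) (Set.uIcc 0 (x + 1)) :=
    intervalIntegral.continuousOn_primitive_interval' (cumHaz_ii hc le_rfl (by linarith))
      Set.left_mem_uIcc
  have hxm : x ∈ Set.uIcc (0:ℝ) (x+1) := by
    rw [Set.uIcc_of_le (by linarith)]; exact ⟨hx0, by linarith⟩
  have h2 := hI x hxm
  apply h2.mono_of_mem_nhdsWithin
  rw [Set.uIcc_of_le (by linarith : (0:ℝ) ≤ x + 1), ← Set.Ici_inter_Iic]
  exact Filter.inter_mem self_mem_nhdsWithin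
    (mem_nhdsWithin_of_mem_nhds (Iic_mem_nhds (by linarith)))

lemma cumHaz_hasDerivAt (hc : ContinuousOn lam (Set.Ici 0)) {x : ℝ} (hx : 0 < x) :
    HasDerivAt (cumHaz lam) (lam x) x := by
  apply intervalIntegral.integral_hasDerivAt_right (cumHaz_ii hc le_rfl hx.le)
  · exact (hc.mono Ioi_subset_Ici_self).stronglyMeasurableAtFilter isOpen_Ioi x hx
  · exact (hc.mono Ioi_subset_Ici_self).continuousAt (Ioi_mem_nhds hx)

end helpers

/-- Generalized inverse of a cumulative hazard, extended to the negative axis by the identity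
so that it is monotone and surjective (hence continuous). -/
noncomputable def hinv (F : ℝ → ℝ) (y : ℝ) : ℝ :=
  if y ≤ 0 then y else sInf {u | 0 ≤ u ∧ y ≤ F u}

section inv
variable {F : ℝ → ℝ}

lemma hinv_comp (hF0 : F 0 = 0) (hmono : StrictMonoOn F (Set.Ici 0))
    {d : ℝ} (hd : 0 ≤ d) : hinv F (F d) = d := by
  unfold hinv
  rcases eq_or_lt_of_le hd with h | h
  · rw [← h, hF0]; simp
  · have hFd : 0 < F d := by
      have := hmono (le_refl (0:ℝ)) hd h
      rwa [hF0] at this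
    rw [if_neg (by linarith)]
    apply IsLeast.csInf_eq
    constructor
    · exact ⟨hd, le_rfl⟩
    · intro u hu
      by_contra hlt
      push_neg at hlt
      have := hmono hu.1 hd hlt
      exact absurd hu.2 (by linarith)

lemma hinv_monotone (htop : Tendsto F atTop atTop) : Monotone (hinv F) := by
  intro y y' hyy'
  unfold hinv
  have hne : ∀ z : ℝ, {u | 0 ≤ u ∧ z ≤ F u}.Nonempty := by
    intro z
    have := (htop.eventually_ge_atTop z).and (eventually_ge_atTop (0:ℝ))
    rcases this.exists with ⟨u, hu1, hu2⟩
    exact ⟨u, hu2, hu1⟩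
  have hbdd : ∀ z : ℝ, BddBelow {u | 0 ≤ u ∧ z ≤ F u} := by
    intro z; exact ⟨0, fun u hu => hu.1⟩
  by_cases h1 : y ≤ 0
  · rw [if_pos h1]
    by_cases h2 : y' ≤ 0
    · rw [if_pos h2]; exact hyy'
    · rw [if_neg h2]
      calc y ≤ 0 := h1
        _ ≤ sInf {u | 0 ≤ u ∧ y' ≤ F u} := le_csInf (hne y') (fun u hu => hu.1)
  · rw [if_neg h1, if_neg (by push_neg at h1 ⊢; linarith)]
    apply csInf_le_csInf (hbdd y) (hne y')
    intro u hu
    exact ⟨hu.1, le_trans hyy' hu.2⟩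

lemma hinv_surjective (hF0 : F 0 = 0) (hmono : StrictMonoOn F (Set.Ici 0)) :
    Function.Surjective (hinv F) := by
  intro v
  by_cases hv : v ≤ 0
  · exact ⟨v, by rw [hinv, if_pos hv]⟩
  · exact ⟨F v, hinv_comp hF0 hmono (le_of_lt (not_le.mp hv))⟩

lemma hinv_continuous (hF0 : F 0 = 0) (hmono : StrictMonoOn F (Set.Ici 0))
    (htop : Tendsto F atTop atTop) : Continuous (hinv F) :=
  (hinv_monotone htop).continuous_of_surjective (hinv_surjective hF0 hmono)

end inv

lemma expMeasure_Iic' {a : ℝ} (ha : 0 ≤ a) :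
    expMeasure 1 (Iic a) = ENNReal.ofReal (1 - Real.exp (-a)) := by
  rw [expMeasure, gammaMeasure, withDensity_apply _ measurableSet_Iic]
  have : (gammaPDF 1 1) = exponentialPDF 1 := rfl
  rw [this, lintegral_exponentialPDF_eq_antiDeriv one_pos, if_pos ha, one_mul]

lemma expMeasure_Ici' {a : ℝ} (ha : 0 ≤ a) :
    expMeasure 1 (Ici a) = ENNReal.ofReal (Real.exp (-a)) := by
  haveI : IsProbabilityMeasure (expMeasure 1) := isProbabilityMeasure_expMeasure one_pos
  have hIio : expMeasure 1 (Iio a) = ENNReal.ofReal (1 - Real.exp (-a)) := by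
    rw [← expMeasure_Iic' ha]
    rw [expMeasure, gammaMeasure, withDensity_apply _ measurableSet_Iio,
      withDensity_apply _ measurableSet_Iic]
    exact setLIntegral_congr Iio_ae_eq_Iic
  have hcompl : Ici a = (Iio a)ᶜ := compl_Iio.symm
  have hle1 : Real.exp (-a) ≤ 1 := by
    rw [Real.exp_le_one_iff]; linarith
  rw [hcompl, measure_compl measurableSet_Iio (measure_ne_top _ _), hIio, measure_univ]
  rw [← ENNReal.ofReal_one, ← ENNReal.ofReal_sub _ (by linarith)]
  congr 1
  ring

set_option maxHeartbeats 1000000 in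
/-- cumulative incidence of the terminal event without a preceding
intermediate event: `P(T₂ ≤ t, D₀ ≤ T₁) = ∫₀ᵗ exp(−Λ₀(s)−Λ⋆(s)) λ₀(s) ds`. -/
theorem latent_terminal_without_intermediate_cif
    {Ω : Type*} [MeasurableSpace Ω] (P : Measure Ω) [IsProbabilityMeasure P]
    (lamS lam0 : ℝ → ℝ) (lam1 : ℝ → ℝ → ℝ)
    (hScont : ContinuousOn lamS (Set.Ici 0))
    (h0cont : ContinuousOn lam0 (Set.Ici 0))
    (h1cont : ContinuousOn (fun p : ℝ × ℝ => lam1 p.1 p.2) {p : ℝ × ℝ | 0 ≤ p.2 ∧ p.2 ≤ p.1})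
    (hSpos : ∀ t ∈ Set.Ici (0:ℝ), 0 < lamS t)
    (h0pos : ∀ t ∈ Set.Ici (0:ℝ), 0 < lam0 t)
    (h1nn : ∀ s t : ℝ, 0 ≤ s → s ≤ t → 0 ≤ lam1 t s)
    (hStop : Tendsto (cumHaz lamS) atTop atTop)
    (h0top : Tendsto (cumHaz lam0) atTop atTop)
    (h1mono : ∀ s : ℝ, 0 ≤ s → StrictMonoOn (fun t => cumHaz1 lam1 t s) (Set.Ici s))
    (h1top : ∀ s : ℝ, 0 ≤ s → Tendsto (fun t => cumHaz1 lam1 t s) atTop atTop)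
    (E1 E2 E3 : Ω → ℝ)
    (hE1m : Measurable E1) (hE2m : Measurable E2) (hE3m : Measurable E3)
    (hindep : iIndepFun ![E1, E2, E3] P)
    (hE1d : P.map E1 = expMeasure 1)
    (hE2d : P.map E2 = expMeasure 1)
    (hE3d : P.map E3 = expMeasure 1)
    (T1 D0 T2 : Ω → ℝ)
    (hT1 : ∀ ω, 0 ≤ T1 ω ∧ cumHaz lamS (T1 ω) = E1 ω)
    (hD0 : ∀ ω, 0 ≤ D0 ω ∧ cumHaz lam0 (D0 ω) = E2 ω)
    (hT2a : ∀ ω, D0 ω ≤ T1 ω → T2 ω = D0 ω)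
    (hT2b : ∀ ω, T1 ω < D0 ω → T1 ω ≤ T2 ω ∧ cumHaz1 lam1 (T2 ω) (T1 ω) = E3 ω)
    :
    ∀ t : ℝ, 0 ≤ t →
      P {ω | T2 ω ≤ t ∧ D0 ω ≤ T1 ω} =
        ENNReal.ofReal
          (∫ s in (0:ℝ)..t, Real.exp (-cumHaz lam0 s - cumHaz lamS s) * lam0 s) := by
  intro t ht
  have m0 : StrictMonoOn (cumHaz lam0) (Set.Ici 0) := cumHaz_strictMonoOn h0cont h0pos
  have mS : StrictMonoOn (cumHaz lamS) (Set.Ici 0) := cumHaz_strictMonoOn hScont hSpos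
  set c : ℝ := cumHaz lam0 t with hc
  have hc0 : 0 ≤ c := cumHaz_nonneg h0cont h0pos ht
  -- the composed function h
  set hfun : ℝ → ℝ := fun y => cumHaz lamS (max (hinv (cumHaz lam0) y) 0) with hfun_def
  have hmax : Continuous (fun y => max (hinv (cumHaz lam0) y) 0) :=
    (hinv_continuous (cumHaz_zero' lam0) m0 h0top).max continuous_const
  have hfun_cont : Continuous hfun := by
    rw [← continuousOn_univ]
    exact (cumHaz_continuousOn hScont).comp hmax.continuousOn
      (fun y _ => (le_max_right _ _ : (0:ℝ) ≤ _))
  have hfun_comp : ∀ d : ℝ, 0 ≤ d → hfun (cumHaz lam0 d) = cumHaz lamS d := by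
    intro d hd
    rw [hfun_def]
    simp only
    rw [hinv_comp (cumHaz_zero' lam0) m0 hd, max_eq_left hd]
  have hfun_nonneg : ∀ y : ℝ, 0 ≤ hfun y :=
    fun y => cumHaz_nonneg hScont hSpos (le_max_right _ _)
  -- rewrite the event
  set S : Set (ℝ × ℝ) := {p : ℝ × ℝ | p.1 ≤ c ∧ hfun p.1 ≤ p.2} with hS_def
  have hSmeas : MeasurableSet S := by
    have : S = {p : ℝ × ℝ | p.1 ≤ c} ∩ {p : ℝ × ℝ | hfun p.1 ≤ p.2} := rfl
    rw [this]
    exact (measurableSet_le measurable_fst measurable_const).inter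
      (measurableSet_le (hfun_cont.measurable.comp measurable_fst) measurable_snd)
  have hset : {ω | T2 ω ≤ t ∧ D0 ω ≤ T1 ω} = (fun ω => (E2 ω, E1 ω)) ⁻¹' S := by
    ext ω
    obtain ⟨hT1nn, hT1e⟩ := hT1 ω
    obtain ⟨hD0nn, hD0e⟩ := hD0 ω
    simp only [mem_setOf_eq, mem_preimage, hS_def]
    rw [← hD0e, ← hT1e, hfun_comp _ hD0nn]
    constructor
    · rintro ⟨h2, h1⟩
      have hT2e := hT2a ω h1
      rw [hT2e] at h2
      exact ⟨m0.monotoneOn hD0nn ht h2, mS.monotoneOn hD0nn hT1nn h1⟩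
    · rintro ⟨h2, h1⟩
      have hD0T1 : D0 ω ≤ T1 ω := (mS.le_iff_le hD0nn hT1nn).mp h1
      have hD0t : D0 ω ≤ t := (m0.le_iff_le hD0nn ht).mp h2
      rw [hT2a ω hD0T1]
      exact ⟨hD0t, hD0T1⟩
  -- independence
  have hindep21 : IndepFun E2 E1 P := by
    have := hindep.indepFun (i := 1) (j := 0) (by norm_num)
    simpa using this
  have hmap : P.map (fun ω => (E2 ω, E1 ω)) = (expMeasure 1).prod (expMeasure 1) := by
    rw [(indepFun_iff_map_prod_eq_prod_map_map hE2m.aemeasurable hE1m.aemeasurable).mp hindep21,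
      hE2d, hE1d]
  have hPev : P {ω | T2 ω ≤ t ∧ D0 ω ≤ T1 ω}
      = ((expMeasure 1).prod (expMeasure 1)) S := by
    rw [hset, ← Measure.map_apply (hE2m.prodMk hE1m) hSmeas, hmap]
  rw [hPev]
  -- compute product measure
  haveI : IsProbabilityMeasure (expMeasure 1) := isProbabilityMeasure_expMeasure one_pos
  have hslice : (fun y => expMeasure 1 (Prod.mk y ⁻¹' S))
      = (Iic c).indicator (fun y => ENNReal.ofReal (Real.exp (-(hfun y)))) := by
    funext y
    by_cases hy : y ≤ c
    · have h1 : Prod.mk y ⁻¹' S = Ici (hfun y) := by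
        ext x
        simp [hS_def, hy, mem_Ici]
      rw [h1, expMeasure_Ici' (hfun_nonneg y),
        Set.indicator_of_mem (show y ∈ Iic c from hy)]
    · have h1 : Prod.mk y ⁻¹' S = ∅ := by
        ext x
        simp [hS_def, hy]
      rw [h1, measure_empty, Set.indicator_of_notMem (show y ∉ Iic c from hy)]
  have hpdfm : Measurable (exponentialPDF 1) := by
    have : exponentialPDF 1 = fun x => ENNReal.ofReal (exponentialPDFReal 1 x) := rfl
    rw [this]
    exact (measurable_exponentialPDFReal 1).ennreal_ofReal
  have hgm : Measurable (fun y => ENNReal.ofReal (Real.exp (-(hfun y)))) :=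
    (hfun_cont.neg.rexp.measurable).ennreal_ofReal
  have hwd : expMeasure 1 = volume.withDensity (exponentialPDF 1) := rfl
  have hzero : ∫⁻ y in Iio (0:ℝ),
      (exponentialPDF 1 * fun y => ENNReal.ofReal (Real.exp (-(hfun y)))) y ∂volume = 0 := by
    calc ∫⁻ y in Iio (0:ℝ),
        (exponentialPDF 1 * fun y => ENNReal.ofReal (Real.exp (-(hfun y)))) y ∂volume
        = ∫⁻ _ in Iio (0:ℝ), (0:ENNReal) ∂volume :=
          setLIntegral_congr_fun measurableSet_Iio
            (fun y (hy : y < 0) => by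
              simp [exponentialPDF_of_neg hy])
      _ = 0 := lintegral_zero
  have hIcc : ∫⁻ y in Icc (0:ℝ) c,
      (exponentialPDF 1 * fun y => ENNReal.ofReal (Real.exp (-(hfun y)))) y ∂volume
      = ∫⁻ y in Icc (0:ℝ) c, ENNReal.ofReal (Real.exp (-(hfun y + y))) ∂volume := by
    apply setLIntegral_congr_fun measurableSet_Icc
    intro y hy
    rw [Pi.mul_apply, exponentialPDF_of_nonneg hy.1, ← ENNReal.ofReal_mul (by positivity)]
    congr 1
    rw [one_mul, one_mul, ← Real.exp_add]
    ring_nf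
  have hGc : Continuous (fun y => Real.exp (-(hfun y + y))) :=
    ((hfun_cont.add continuous_id).neg).rexp
  have hGi : IntegrableOn (fun y => Real.exp (-(hfun y + y))) (Icc 0 c) volume :=
    hGc.continuousOn.integrableOn_compact isCompact_Icc
  calc ((expMeasure 1).prod (expMeasure 1)) S
      = ∫⁻ y, expMeasure 1 (Prod.mk y ⁻¹' S) ∂(expMeasure 1) := Measure.prod_apply hSmeas
    _ = ∫⁻ y in Iic c, ENNReal.ofReal (Real.exp (-(hfun y))) ∂(expMeasure 1) := by
        rw [hslice]
        exact lintegral_indicator measurableSet_Iic _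
    _ = ∫⁻ y in Iic c,
          (exponentialPDF 1 * fun y => ENNReal.ofReal (Real.exp (-(hfun y)))) y ∂volume := by
        rw [hwd, restrict_withDensity measurableSet_Iic]
        exact lintegral_withDensity_eq_lintegral_mul _ hpdfm hgm
    _ = (∫⁻ y in Iio (0:ℝ),
          (exponentialPDF 1 * fun y => ENNReal.ofReal (Real.exp (-(hfun y)))) y ∂volume)
        + ∫⁻ y in Icc (0:ℝ) c,
          (exponentialPDF 1 * fun y => ENNReal.ofReal (Real.exp (-(hfun y)))) y ∂volume :=
        lintegral_Iic_eq_lintegral_Iio_add_Icc _ hc0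
    _ = ∫⁻ y in Icc (0:ℝ) c, ENNReal.ofReal (Real.exp (-(hfun y + y))) ∂volume := by
        rw [hzero, zero_add]
        exact hIcc
    _ = ENNReal.ofReal (∫ y in Icc (0:ℝ) c, Real.exp (-(hfun y + y))) :=
        (ofReal_integral_eq_lintegral_ofReal hGi
          (ae_of_all _ (fun y => (Real.exp_pos _).le))).symm
    _ = ENNReal.ofReal
          (∫ s in (0:ℝ)..t, Real.exp (-cumHaz lam0 s - cumHaz lamS s) * lam0 s) := by
        congr 1
        rw [integral_Icc_eq_integral_Ioc, ← intervalIntegral.integral_of_le hc0]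
        have hca : ContinuousOn (cumHaz lam0) (Set.uIcc 0 t) :=
          (cumHaz_continuousOn h0cont).mono
            (by rw [uIcc_of_le ht]; exact Icc_subset_Ici_self)
        have hder : ∀ x ∈ Set.Ioo (min (0:ℝ) t) (max 0 t),
            HasDerivWithinAt (cumHaz lam0) (lam0 x) (Set.Ioi x) x := by
          intro x hx
          rw [min_eq_left ht, max_eq_right ht] at hx
          exact (cumHaz_hasDerivAt h0cont hx.1).hasDerivWithinAt
        have hcb : ContinuousOn lam0 (Set.uIcc 0 t) :=
          h0cont.mono (by rw [uIcc_of_le ht]; exact Icc_subset_Ici_self)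
        have hsub := intervalIntegral.integral_comp_smul_deriv'' (a := (0:ℝ)) (b := t)
          (f := cumHaz lam0) (f' := lam0) (g := fun y => Real.exp (-(hfun y + y)))
          hca hder hcb hGc.continuousOn
        rw [cumHaz_zero'] at hsub
        rw [← hc] at hsub
        rw [← hsub]
        apply intervalIntegral.integral_congr
        intro x hx
        rw [uIcc_of_le ht] at hx
        simp only [Function.comp_apply, smul_eq_mul]
        rw [hfun_comp x hx.1, mul_comm]
        congr 1
        congr 1
        ring
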